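/- Let L be closed under a unary connective ¬ and let C be a C-logics on L satisfying Weak Compactness, ¬-R1 and ¬-R2. If a ∉ C(A), then there is a maximal consistent set B ⊇ A with a ∉ B. -/
import Mathlib

/-- For a C-logics with Weak Compactness, ¬-R1 and ¬-R2: if `a ∉ C(A)`, there is a
maximal consistent set `B ⊇ A` with `a ∉ B`. -/
theorem stmt_12 {L : Type*} [Nonempty L] (neg : L → L) (C : Set L → Set L)
    (hIncl : ∀ A : Set L, A ⊆ C A)
    (hCum : ∀ A B : Set L, A ⊆ B → B ⊆ C A → C A = C B)
    (hWC : ∀ A : Set L, C A = Set.univ → ∃ B : Set L, B ⊆ A ∧ B.Finite ∧ C B = Set.univ)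
    (hneg1 : ∀ (A : Set L) (a : L), C (A ∪ {a, neg a}) = Set.univ)
    (hneg2 : ∀ (A : Set L) (a : L), C (A ∪ {neg a}) = Set.univ → a ∈ C A)
    (A : Set L) (a : L) (ha : a ∉ C A) :
    ∃ B : Set L, A ⊆ B ∧
      (C B ≠ Set.univ ∧ ∀ B' : Set L, B ⊂ B' → C B' = Set.univ) ∧
      a ∉ B := by
  -- inconsistency propagates upward
  have hmono : ∀ F G : Set L, F ⊆ G → C F = Set.univ → C G = Set.univ := by
    intro F G hFG hF
    have := hCum F G hFG (by rw [hF]; exact Set.subset_univ _)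
    rw [← this, hF]
  -- A ∪ {¬a} is consistent
  have hcons : C (A ∪ {neg a}) ≠ Set.univ := fun h => ha (hneg2 A a h)
  -- Zorn on consistent supersets of A ∪ {¬a}
  obtain ⟨M, hMsub, hMmax⟩ := zorn_subset_nonempty
      {B : Set L | A ∪ {neg a} ⊆ B ∧ C B ≠ Set.univ}
      (fun c hc hchain ⟨t, ht⟩ => by
        refine ⟨⋃₀ c, ⟨(hc ht).1.trans (Set.subset_sUnion_of_mem ht), ?_⟩,
          fun s hs => Set.subset_sUnion_of_mem hs⟩
        intro hU
        obtain ⟨F, hFsub, hFfin, hFinc⟩ := hWC _ hU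
        obtain ⟨s, hsc, hFs⟩ := DirectedOn.exists_mem_subset_of_finset_subset_biUnion
          (f := id) (⟨t, ht⟩ : c.Nonempty) hchain.directedOn
          (s := hFfin.toFinset) (by
            simpa [Set.Finite.coe_toFinset, ← Set.sUnion_eq_biUnion] using hFsub)
        exact (hc hsc).2 (hmono F s (by simpa [Set.Finite.coe_toFinset] using hFs) hFinc))
      (A ∪ {neg a}) ⟨subset_rfl, hcons⟩
  obtain ⟨hAM, hMcons⟩ := hMmax.prop
  refine ⟨M, (Set.subset_union_left).trans hAM, ⟨hMcons, ?_⟩, ?_⟩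
  · intro B' hss
    obtain ⟨b, hbB', hbM⟩ := Set.exists_of_ssubset hss
    by_contra hB'
    have : M ∪ {b} ⊆ M := hMmax.le_of_ge
      ⟨hAM.trans Set.subset_union_left,
        fun h => hB' (hmono _ _ (Set.union_subset hss.1 (by simpa)) h)⟩
      Set.subset_union_left
    exact hbM (this (by simp))
  · intro haM
    apply hMcons
    have hna : neg a ∈ M := hAM (by simp)
    have : M ∪ {a, neg a} = M := by
      apply Set.union_eq_self_of_subset_right
      intro x hx; rcases hx with h | h <;> simp_all
    rw [← this]; exact hneg1 M a
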